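/- Let x₁,…,x_K ∈ ℂ^{N}, let μ₁,…,μ_K > 0 and δ₁,…,δ_K ≥ 0 be real numbers, and set Φ = I_N + Σ_{k=1}^{K} μ_k·x_k·x_kᴴ and A = Φ⁻¹·(Σ_{k=1}^{K} δ_k·x_k·x_kᴴ)·Φ⁻¹. Then A is Hermitian positive semidefinite and its spectral norm (largest eigenvalue) satisfies ‖A‖ ≤ max_{1≤k≤K} δ_k/μ_k. -/

import Mathlib

open Matrix Finset
open scoped ComplexOrder

private lemma sum_mulVec' {N K : ℕ} (M : Fin K → Matrix (Fin N) (Fin N) ℂ) (y : Fin N → ℂ) :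
    (∑ k, M k) *ᵥ y = ∑ k, M k *ᵥ y := by
  ext i
  simp only [mulVec, dotProduct, Matrix.sum_apply, Finset.sum_mul, Finset.sum_apply]
  rw [Finset.sum_comm]

private lemma dotProduct_sum' {N K : ℕ} (v : Fin N → ℂ) (w : Fin K → Fin N → ℂ) :
    v ⬝ᵥ (∑ k, w k) = ∑ k, v ⬝ᵥ w k := by
  simp [dotProduct, Finset.sum_apply, Finset.mul_sum]
  rw [Finset.sum_comm]

private lemma vecMulVec_mulVec' {N : ℕ} (a y : Fin N → ℂ) :
    vecMulVec a (star a) *ᵥ y = (star a ⬝ᵥ y) • a := by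
  ext i
  simp [mulVec, dotProduct, vecMulVec_apply, Finset.sum_mul]
  exact Finset.sum_congr rfl fun j _ => by ring

/-- quadratic form of a weighted sum of outer products -/
private lemma quad_sum {N K : ℕ} (x : Fin K → Fin N → ℂ) (r : Fin K → ℝ) (y : Fin N → ℂ) :
    star y ⬝ᵥ ((∑ k, (r k : ℂ) • vecMulVec (x k) (star (x k))) *ᵥ y)
      = ((∑ k, r k * Complex.normSq (star (x k) ⬝ᵥ y) : ℝ) : ℂ) := by
  rw [sum_mulVec', dotProduct_sum']
  push_cast
  refine Finset.sum_congr rfl fun k _ => ?_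
  rw [smul_mulVec, vecMulVec_mulVec', dotProduct_smul, dotProduct_smul]
  have h1 : star y ⬝ᵥ x k = star (star (x k) ⬝ᵥ y) := by
    rw [star_dotProduct]
  rw [smul_eq_mul, smul_eq_mul, h1, RCLike.star_def, Complex.mul_conj]

private lemma outer_sum_posSemidef {N K : ℕ} (x : Fin K → Fin N → ℂ) (r : Fin K → ℝ)
    (hr : ∀ k, 0 ≤ r k) :
    (∑ k, (r k : ℂ) • vecMulVec (x k) (star (x k))).PosSemidef := by
  rw [posSemidef_iff_dotProduct_mulVec]
  constructor
  · unfold Matrix.IsHermitian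
    rw [conjTranspose_sum]
    refine Finset.sum_congr rfl fun k _ => ?_
    have hvv : (vecMulVec (x k) (star (x k)))ᴴ = vecMulVec (x k) (star (x k)) := by
      ext i j
      simp [vecMulVec_apply, conjTranspose_apply, mul_comm]
    rw [conjTranspose_smul, hvv]
    congr 1
    simp [Complex.star_def, Complex.conj_ofReal]
  · intro y
    rw [quad_sum]
    rw [Complex.zero_le_real]
    exact Finset.sum_nonneg fun k _ => mul_nonneg (hr k) (Complex.normSq_nonneg _)

theorem regularized_interference_matrix_norm_bound
    (N K : ℕ) (hK : 0 < K)
    (x : Fin K → Fin N → ℂ)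
    (μ δ : Fin K → ℝ) (hμ : ∀ k, 0 < μ k) (hδ : ∀ k, 0 ≤ δ k)
    (Φ A : Matrix (Fin N) (Fin N) ℂ)
    (hΦ : Φ = 1 + ∑ k, (μ k : ℂ) • Matrix.vecMulVec (x k) (star (x k)))
    (hA : A = Φ⁻¹ * (∑ k, (δ k : ℂ) • Matrix.vecMulVec (x k) (star (x k))) * Φ⁻¹) :
    A.IsHermitian ∧ A.PosSemidef ∧
    ∀ z ∈ spectrum ℂ A, ‖z‖ ≤
      Finset.univ.sup' (Finset.univ_nonempty_iff.mpr (Fin.pos_iff_nonempty.mp hK))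
        (fun k => δ k / μ k) := by
  set T : Matrix (Fin N) (Fin N) ℂ := ∑ k, (μ k : ℂ) • Matrix.vecMulVec (x k) (star (x k)) with hT
  set S : Matrix (Fin N) (Fin N) ℂ := ∑ k, (δ k : ℂ) • Matrix.vecMulVec (x k) (star (x k)) with hS
  have hTpsd : T.PosSemidef := outer_sum_posSemidef x μ fun k => (hμ k).le
  have hSpsd : S.PosSemidef := outer_sum_posSemidef x δ hδ
  have hΦpd : Φ.PosDef := by
    rw [hΦ]; exact Matrix.PosDef.add_posSemidef Matrix.PosDef.one hTpsd
  have hΦinv : Φ⁻¹.IsHermitian := hΦpd.isHermitian.inv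
  have hApsd : A.PosSemidef := by
    have h := hSpsd.conjTranspose_mul_mul_same Φ⁻¹
    rwa [hΦinv.eq, ← hA] at h
  refine ⟨hApsd.isHermitian, hApsd, ?_⟩
  intro z hz
  set c : ℝ := Finset.univ.sup' (Finset.univ_nonempty_iff.mpr (Fin.pos_iff_nonempty.mp hK))
      (fun k => δ k / μ k) with hc
  have hcle : ∀ k, δ k ≤ c * μ k := by
    intro k
    have := Finset.le_sup' (fun k => δ k / μ k) (Finset.mem_univ k)
    rw [← hc] at this
    calc δ k = (δ k / μ k) * μ k := (div_mul_cancel₀ _ (hμ k).ne').symm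
    _ ≤ c * μ k := by exact mul_le_mul_of_nonneg_right this (hμ k).le
  have hc0 : 0 ≤ c := by
    have h := Finset.le_sup' (fun k => δ k / μ k) (Finset.mem_univ (⟨0, hK⟩ : Fin K))
    rw [← hc] at h
    exact le_trans (div_nonneg (hδ ⟨0, hK⟩) (hμ ⟨0, hK⟩).le) h
  -- get an eigenvector
  rw [← AlgEquiv.spectrum_eq (Matrix.toLinAlgEquiv (Pi.basisFun ℂ (Fin N))) A,
    ← Module.End.hasEigenvalue_iff_mem_spectrum] at hz
  obtain ⟨v, hv⟩ := hz.exists_hasEigenvector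
  have hv0 : v ≠ 0 := hv.right
  have heq : ((Matrix.toLinAlgEquiv (Pi.basisFun ℂ (Fin N))) A) v = A *ᵥ v := by
    rw [Matrix.toLinAlgEquiv_apply]
    have hrepr : ⇑((Pi.basisFun ℂ (Fin N)).repr v) = v := funext fun j => Pi.basisFun_repr ℂ (Fin N) v j
    rw [hrepr]
    ext i
    simp [Pi.basisFun_apply, Finset.sum_apply, Pi.single_apply]
  have hvz : A *ᵥ v = z • v := by
    have := hv.apply_eq_smul
    rwa [heq] at this
  -- setup
  set w : Fin N → ℂ := Φ⁻¹ *ᵥ v with hw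
  have hΦu : IsUnit Φ.det := (Matrix.isUnit_iff_isUnit_det Φ).mp hΦpd.isUnit
  have hvΦw : Φ *ᵥ w = v := by
    rw [hw, Matrix.mulVec_mulVec, Matrix.mul_nonsing_inv _ hΦu, Matrix.one_mulVec]
  set q : Fin K → ℝ := fun k => Complex.normSq (star (x k) ⬝ᵥ w) with hq
  set a : ℝ := ∑ k, δ k * q k with ha
  set b : ℝ := ∑ k, μ k * q k with hb
  have ha0 : 0 ≤ a := Finset.sum_nonneg fun k _ => mul_nonneg (hδ k) (Complex.normSq_nonneg _)
  have hb0 : 0 ≤ b := Finset.sum_nonneg fun k _ => mul_nonneg (hμ k).le (Complex.normSq_nonneg _)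
  have hab : a ≤ c * b := by
    rw [ha, hb, Finset.mul_sum]
    exact Finset.sum_le_sum fun k _ => by
      have := mul_le_mul_of_nonneg_right (hcle k) (Complex.normSq_nonneg (star (x k) ⬝ᵥ w))
      calc δ k * q k ≤ (c * μ k) * q k := this
      _ = c * (μ k * q k) := by ring
  set nv : ℝ := ∑ i, Complex.normSq (v i) with hnv
  have hvv : star v ⬝ᵥ v = (nv : ℂ) := by
    rw [hnv]; push_cast
    exact Finset.sum_congr rfl fun i _ => Complex.normSq_eq_conj_mul_self.symm
  have hnv0 : 0 < nv := by
    rcases Function.ne_iff.mp hv0 with ⟨i, hi⟩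
    exact Finset.sum_pos' (fun i _ => Complex.normSq_nonneg _)
      ⟨i, Finset.mem_univ i, Complex.normSq_pos.mpr hi⟩
  -- star v ⬝ᵥ (A *ᵥ v) = star w ⬝ᵥ (S *ᵥ w)
  have hdw : star v ᵥ* Φ⁻¹ = star w := by
    rw [hw, Matrix.star_mulVec, hΦinv.eq]
  have key : star v ⬝ᵥ (A *ᵥ v) = (a : ℂ) := by
    rw [hA, ← Matrix.mulVec_mulVec, ← Matrix.mulVec_mulVec, Matrix.dotProduct_mulVec, hdw,
      ← hw, quad_sum]
  have hza : z * (nv : ℂ) = (a : ℂ) := by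
    rw [← key, hvz, dotProduct_smul, smul_eq_mul, hvv]
  -- b ≤ nv
  have hwT : star w ⬝ᵥ (T *ᵥ w) = (b : ℂ) := quad_sum x μ w
  have hTwW : star (T *ᵥ w) ⬝ᵥ w = (b : ℂ) := by
    have : star (star w ⬝ᵥ (T *ᵥ w)) = star (T *ᵥ w) ⬝ᵥ w := by
      rw [star_dotProduct]; simp
    rw [← this, hwT]; simp
  have hnveq : (nv : ℂ) = star w ⬝ᵥ w + 2 * b + star (T *ᵥ w) ⬝ᵥ (T *ᵥ w) := by
    rw [← hvv, ← hvΦw]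
    rw [hΦ, Matrix.add_mulVec, Matrix.one_mulVec, star_add, add_dotProduct,
      dotProduct_add, dotProduct_add, hwT, hTwW]
    ring
  have hww : star w ⬝ᵥ w = ((∑ i, Complex.normSq (w i) : ℝ) : ℂ) := by
    push_cast; exact Finset.sum_congr rfl fun i _ => Complex.normSq_eq_conj_mul_self.symm
  have hTwTw : star (T *ᵥ w) ⬝ᵥ (T *ᵥ w) =
      ((∑ i, Complex.normSq ((T *ᵥ w) i) : ℝ) : ℂ) := by
    push_cast; exact Finset.sum_congr rfl fun i _ => Complex.normSq_eq_conj_mul_self.symm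
  have hnvreal : nv = (∑ i, Complex.normSq (w i)) + 2 * b + ∑ i, Complex.normSq ((T *ᵥ w) i) := by
    have := hnveq
    rw [hww, hTwTw] at this
    exact_mod_cast this
  have hbnv : b ≤ nv := by
    rw [hnvreal]
    have h1 : 0 ≤ ∑ i, Complex.normSq (w i) := Finset.sum_nonneg fun i _ => Complex.normSq_nonneg _
    have h2 : 0 ≤ ∑ i, Complex.normSq ((T *ᵥ w) i) :=
      Finset.sum_nonneg fun i _ => Complex.normSq_nonneg _
    linarith
  -- conclude
  have hzreal : z = ((a / nv : ℝ) : ℂ) := by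
    have : z = (a : ℂ) / (nv : ℂ) := by
      field_simp
      rw [hza]
    rw [this]; push_cast; ring
  rw [hzreal, Complex.norm_real, Real.norm_eq_abs, abs_of_nonneg (div_nonneg ha0 hnv0.le)]
  rw [div_le_iff₀ hnv0]
  calc a ≤ c * b := hab
  _ ≤ c * nv := mul_le_mul_of_nonneg_left hbnv hc0
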